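/- Every bilinear lattice $(V,f)$ has an integral Wu class, i.e. there exists $v\in V$ such that $f(x,x) - f(x,v)\in 2\mathbb Z$ for all $x\in V$. -/

import Mathlib

set_option maxHeartbeats 1000000

lemma zmod2_mul_self (a : ZMod 2) : a * a = a := by revert a; decide

/-- every bilinear lattice `(V,f)` (a finitely generated free abelian group with
a symmetric nondegenerate bilinear form `f : V × V → ℤ`) has an integral Wu class, i.e.
there is `v ∈ V` with `f(x,x) - f(x,v) ∈ 2ℤ` for all `x ∈ V`. -/
theorem stmt_5 {V : Type*} [AddCommGroup V] [Module.Free ℤ V] [Module.Finite ℤ V]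
    (f : V →ₗ[ℤ] V →ₗ[ℤ] ℤ)
    (hsymm : ∀ x y : V, f x y = f y x)
    (hnd : ∀ x : V, (∀ y : V, f x y = 0) → x = 0) :
    ∃ v : V, ∀ x : V, (2 : ℤ) ∣ (f x x - f x v) := by
  classical
  set ι := Module.Free.ChooseBasisIndex ℤ V
  set bV : Module.Basis ι ℤ V := Module.Free.chooseBasis ℤ V with hbV
  set M : Matrix ι ι (ZMod 2) := fun i j => ((f (bV i) (bV j) : ℤ) : ZMod 2) with hM
  set W := ι → ZMod 2
  set B : W →ₗ[ZMod 2] W →ₗ[ZMod 2] ZMod 2 := Matrix.toLinearMap₂' (ZMod 2) M with hB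
  have hBapp : ∀ x y : W, B x y = ∑ i, ∑ j, x i * (M i j * y j) := by
    intro x y
    rw [hB, Matrix.toLinearMap₂'_apply]
    refine Finset.sum_congr rfl fun i _ => Finset.sum_congr rfl fun j _ => ?_
    simp only [smul_eq_mul]
    ring
  have hBsymm : ∀ x y : W, B x y = B y x := by
    intro x y
    rw [hBapp, hBapp, Finset.sum_comm]
    refine Finset.sum_congr rfl fun i _ => Finset.sum_congr rfl fun j _ => ?_
    have : M j i = M i j := by simp [hM, hsymm]
    rw [this]; ring
  -- the diagonal map is linear in characteristic 2
  set Q : W →ₗ[ZMod 2] ZMod 2 :=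
    { toFun := fun x => B x x
      map_add' := by
        intro x y
        simp only [map_add, LinearMap.add_apply]
        have h1 : B y x = B x y := hBsymm y x
        rw [h1]
        rw [show B x x + B x y + (B x y + B y y) =
          B x x + B y y + (B x y + B x y) by ring, CharTwo.add_self_eq_zero, add_zero]
      map_smul' := by
        intro c x
        simp only [map_smul, LinearMap.smul_apply, smul_eq_mul, RingHom.id_apply]
        rw [← mul_assoc, zmod2_mul_self c] } with hQ
  have hQapp : ∀ x : W, Q x = B x x := fun _ => rfl
  -- Q lies in the range of the dual map of B
  have hmem : Q ∈ Submodule.dualAnnihilator (LinearMap.ker B) := by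
    rw [Submodule.mem_dualAnnihilator]
    intro x hx
    rw [LinearMap.mem_ker] at hx
    rw [hQapp, hx]; rfl
  rw [← LinearMap.range_dualMap_eq_dualAnnihilator_ker] at hmem
  obtain ⟨ψ, hψ⟩ := hmem
  set c : W := (Module.evalEquiv (ZMod 2) W).symm ψ with hc
  have hψc : ψ = Module.Dual.eval (ZMod 2) W c := by
    rw [hc]
    simp [← Module.evalEquiv_apply]
  have hQc : ∀ x : W, Q x = B x c := by
    intro x
    rw [← hψ, LinearMap.dualMap_apply, hψc]
    rfl
  -- lift c to an integral vector
  set v : V := ∑ i, ((c i).val : ℤ) • bV i with hv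
  have hreprv : ∀ i, bV.repr v i = ((c i).val : ℤ) := by
    intro i
    rw [hv, bV.repr_sum_self]
  -- reduction map
  set π : V → W := fun x i => ((bV.repr x i : ℤ) : ZMod 2) with hπ
  have hπv : π v = c := by
    funext i
    simp only [hπ, hreprv]
    push_cast
    simp [ZMod.natCast_val, ZMod.cast_id]
  have hcompat : ∀ x y : V, ((f x y : ℤ) : ZMod 2) = B (π x) (π y) := by
    intro x y
    rw [hBapp]
    conv_lhs => rw [← bV.sum_repr x, ← bV.sum_repr y]
    simp only [map_sum, map_smul, LinearMap.map_smul₂, LinearMap.smul_apply, smul_eq_mul,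
      LinearMap.coe_sum, Finset.sum_apply]
    push_cast
    simp only [Finset.mul_sum]
    rw [Finset.sum_comm]
    refine Finset.sum_congr rfl fun i _ => Finset.sum_congr rfl fun j _ => ?_
    simp only [hπ, hM]
    push_cast
    ring
  refine ⟨v, fun x => ?_⟩
  have h2 : ((f x x - f x v : ℤ) : ZMod 2) = 0 := by
    push_cast
    rw [hcompat x x, hcompat x v, hπv, ← hQapp, hQc]
    ring
  have := (ZMod.intCast_zmod_eq_zero_iff_dvd (f x x - f x v) 2).mp h2
  exact_mod_cast this
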